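/- Let 0 < σ < 2 and let a, b, c ∈ ℝ³ be nonzero vectors with a = b + c, |c| ≤ min(|a|, |b|), |a| > |b|, and cos[a,c] ≤ 9/10. Then p(|b|) + p(|c|) - p(|a|) ≥ p(|c|)/10, where p(r) = (r² + r^{2-σ})^{1/2}. -/

import Mathlib

theorem phase_lower_bound_angle (σ : ℝ) (hσ0 : 0 < σ) (hσ2 : σ < 2)
    (p : ℝ → ℝ) (hp : p = fun r => Real.sqrt (r ^ (2:ℝ) + r ^ (2 - σ)))
    (a b c : EuclideanSpace ℝ (Fin 3))
    (ha : a ≠ 0) (hb : b ≠ 0) (hc : c ≠ 0) (habc : a = b + c)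
    (hcmin : ‖c‖ ≤ min ‖a‖ ‖b‖) (hba : ‖b‖ < ‖a‖)
    (hcos : (inner ℝ a c : ℝ) / (‖a‖ * ‖c‖) ≤ 9 / 10) :
    p ‖c‖ / 10 ≤ p ‖b‖ + p ‖c‖ - p ‖a‖ := by
  set A := ‖a‖ with hA
  set B := ‖b‖ with hB
  set C := ‖c‖ with hC
  have hApos : 0 < A := norm_pos_iff.mpr ha
  have hBpos : 0 < B := norm_pos_iff.mpr hb
  have hCpos : 0 < C := norm_pos_iff.mpr hc
  have hCA : C ≤ A := le_trans hcmin (min_le_left _ _)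
  -- Step 1 : A ≤ B + (9/10) * C
  have hac : (inner ℝ a c : ℝ) ≤ 9 / 10 * (A * C) := by
    have h := (div_le_iff₀ (by positivity : (0:ℝ) < A * C)).mp hcos
    linarith
  have hab : (inner ℝ a b : ℝ) ≤ A * B := real_inner_le_norm a b
  have haa : (inner ℝ a a : ℝ) = A ^ 2 := real_inner_self_eq_norm_sq a
  have hsum : (inner ℝ a a : ℝ) = inner ℝ a b + inner ℝ a c := by
    rw [habc, inner_add_right]
  have hkey : A ≤ B + 9 / 10 * C := by
    have h2 : A ^ 2 ≤ A * B + 9 / 10 * (A * C) := by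
      rw [← haa, hsum]; linarith
    nlinarith
  -- rewrite p r = r * sqrt (1 + r ^ (-σ)) for r > 0
  have pform : ∀ r : ℝ, 0 < r → p r = r * Real.sqrt (1 + r ^ (-σ)) := by
    intro r hr
    rw [hp]
    have h1 : r ^ ((2:ℝ) - σ) = r ^ (2:ℝ) * r ^ (-σ) := by
      rw [← Real.rpow_add hr]; ring_nf
    have h2 : r ^ (2:ℝ) + r ^ (2 - σ) = r ^ (2:ℝ) * (1 + r ^ (-σ)) := by
      rw [h1]; ring
    simp only [h2]
    rw [Real.sqrt_mul (by positivity)]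
    congr 1
    rw [Real.rpow_two, Real.sqrt_sq hr.le]
  -- antitone of r ^ (-σ)
  have hant : ∀ s t : ℝ, 0 < s → s ≤ t → t ^ (-σ) ≤ s ^ (-σ) := by
    intro s t hs hst
    have ht : 0 < t := lt_of_lt_of_le hs hst
    rw [Real.rpow_neg hs.le, Real.rpow_neg ht.le]
    have : s ^ σ ≤ t ^ σ := Real.rpow_le_rpow hs.le hst hσ0.le
    exact inv_anti₀ (Real.rpow_pos_of_pos hs σ) this
  set QA := Real.sqrt (1 + A ^ (-σ)) with hQA
  have hQApos : 0 < QA := Real.sqrt_pos.mpr (by positivity)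
  have hpB : B * QA ≤ p B := by
    rw [pform B hBpos]
    apply mul_le_mul_of_nonneg_left _ hBpos.le
    exact Real.sqrt_le_sqrt (by linarith [hant B A hBpos hba.le])
  have hpC : C * QA ≤ p C := by
    rw [pform C hCpos]
    apply mul_le_mul_of_nonneg_left _ hCpos.le
    exact Real.sqrt_le_sqrt (by linarith [hant C A hCpos hCA])
  have hpA : p A = A * QA := pform A hApos
  have : p A ≤ p B + 9 / 10 * p C := by
    have : A * QA ≤ (B + 9 / 10 * C) * QA :=
      mul_le_mul_of_nonneg_right hkey hQApos.le
    nlinarith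
  linarith
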